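/- Suppose a positive semidefinite n×n matrix K satisfies the algebraic Riccati equation K = π(E[N₁ + A₁ᵀ K A₁]). Set Q* = E[N₁ + A₁ᵀ K A₁] and Γ = Γ(Q*). Then for every x ∈ ℝⁿ, the linear feedback control u_t = Γ x_t (where x_0 = x and x_{t+1} = A_{t+1}[x_t; Γ x_t]) is an admissible control satisfying E[J(x, u)] ≤ xᵀ K x. In particular V(x) ≤ xᵀ K x for all x, so the LQ problem is well-posed. -/

import Mathlib

open MeasureTheory Matrix Filter ProbabilityTheory
open scoped ENNReal NNReal

noncomputable section

instance matrixMeasurableSpace {I J : Type*} : MeasurableSpace (Matrix I J ℝ) :=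
  inferInstanceAs (MeasurableSpace (I → J → ℝ))

/-- The Schur-complement map `π(P) = P_xx − P_xu P_uu⁻¹ P_ux`. -/
def piMap {n m : ℕ} (P : Matrix (Fin n ⊕ Fin m) (Fin n ⊕ Fin m) ℝ) :
    Matrix (Fin n) (Fin n) ℝ :=
  P.toBlocks₁₁ - P.toBlocks₁₂ * P.toBlocks₂₂⁻¹ * P.toBlocks₂₁

/-- The feedback-gain map `Γ(P) = −P_uu⁻¹ P_ux`. -/
def gammaMap {n m : ℕ} (P : Matrix (Fin n ⊕ Fin m) (Fin n ⊕ Fin m) ℝ) :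
    Matrix (Fin m) (Fin n) ℝ :=
  -(P.toBlocks₂₂⁻¹ * P.toBlocks₂₁)

/-- Loewner order: `X ≤ Y` iff `Y - X` is positive semidefinite. -/
def loewnerLE {I : Type*} [Fintype I] (X Y : Matrix I I ℝ) : Prop :=
  (Y - X).PosSemidef

/-- Spectral norm (`2`-norm) of a real matrix. -/
def specNorm {I J : Type*} [Fintype I] [Fintype J] [DecidableEq J]
    (M : Matrix I J ℝ) : ℝ :=
  ‖LinearMap.toContinuousLinearMap (Matrix.toEuclideanLin M)‖

/-- Entrywise expectation of a random matrix. -/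
def matExp {Ω : Type*} [MeasurableSpace Ω] (μpr : Measure Ω) {I J : Type*}
    (M : Ω → Matrix I J ℝ) : Matrix I J ℝ :=
  Matrix.of fun i j => ∫ ω, M ω i j ∂μpr

section LQ

variable {n m : ℕ} {Ω : Type*} [MeasurableSpace Ω]

/-- The filtration `𝓕_t = σ(A_s, N_s : 1 ≤ s ≤ t)` (with `𝓕_0` trivial). -/
def lqFiltration (A : ℕ → Ω → Matrix (Fin n) (Fin n ⊕ Fin m) ℝ)
    (N : ℕ → Ω → Matrix (Fin n ⊕ Fin m) (Fin n ⊕ Fin m) ℝ) :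
    ℕ → MeasurableSpace Ω := fun t =>
  ⨆ s ∈ Finset.Icc 1 t, MeasurableSpace.comap (fun ω => (A s ω, N s ω)) inferInstance

/-- A control is admissible if it is adapted to the filtration. -/
def Admissible {k : ℕ} (F : ℕ → MeasurableSpace Ω) (u : ℕ → Ω → Fin k → ℝ) : Prop :=
  ∀ t, @Measurable Ω (Fin k → ℝ) (F t) _ (u t)

/-- The state process `x_0 = x`, `x_{t+1} = A_{t+1} [x_t; u_t]`. -/
def statePath (A : ℕ → Ω → Matrix (Fin n) (Fin n ⊕ Fin m) ℝ)
    (x : Fin n → ℝ) (u : ℕ → Ω → Fin m → ℝ) : ℕ → Ω → Fin n → ℝ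
  | 0 => fun _ => x
  | t + 1 => fun ω => A (t + 1) ω *ᵥ Sum.elim (statePath A x u t ω) (u t ω)

/-- The stage cost `[x_tᵀ, u_tᵀ] N_{t+1} [x_t; u_t]`. -/
def stageCost (A : ℕ → Ω → Matrix (Fin n) (Fin n ⊕ Fin m) ℝ)
    (N : ℕ → Ω → Matrix (Fin n ⊕ Fin m) (Fin n ⊕ Fin m) ℝ)
    (x : Fin n → ℝ) (u : ℕ → Ω → Fin m → ℝ) (t : ℕ) (ω : Ω) : ℝ :=
  Sum.elim (statePath A x u t ω) (u t ω) ⬝ᵥ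
    (N (t + 1) ω *ᵥ Sum.elim (statePath A x u t ω) (u t ω))

/-- The total cost `J(x, u) ∈ [0,∞]`. -/
def costJ (A : ℕ → Ω → Matrix (Fin n) (Fin n ⊕ Fin m) ℝ)
    (N : ℕ → Ω → Matrix (Fin n ⊕ Fin m) (Fin n ⊕ Fin m) ℝ)
    (x : Fin n → ℝ) (u : ℕ → Ω → Fin m → ℝ) (ω : Ω) : ℝ≥0∞ :=
  ∑' t, ENNReal.ofReal (stageCost A N x u t ω)

/-- The value function `V(x) = inf over admissible u of E[J(x,u)]`. -/
def valueV (μpr : Measure Ω) (A : ℕ → Ω → Matrix (Fin n) (Fin n ⊕ Fin m) ℝ)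
    (N : ℕ → Ω → Matrix (Fin n ⊕ Fin m) (Fin n ⊕ Fin m) ℝ)
    (x : Fin n → ℝ) : ℝ≥0∞ :=
  ⨅ (u : ℕ → Ω → Fin m → ℝ) (_ : Admissible (lqFiltration A N) u),
    ∫⁻ ω, costJ A N x u ω ∂μpr

/-- The Riccati iteration `K_0 = O`, `K_{t+1} = π(E[N₁ + A₁ᵀ K_t A₁])`. -/
def Kseq (μpr : Measure Ω) (A : ℕ → Ω → Matrix (Fin n) (Fin n ⊕ Fin m) ℝ)
    (N : ℕ → Ω → Matrix (Fin n ⊕ Fin m) (Fin n ⊕ Fin m) ℝ) :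
    ℕ → Matrix (Fin n) (Fin n) ℝ
  | 0 => 0
  | t + 1 => piMap (matExp μpr (fun ω => N 1 ω + (A 1 ω)ᵀ * Kseq μpr A N t * A 1 ω))

/-- The Q-learning process of Algorithm 1. -/
def Qproc (A : ℕ → Ω → Matrix (Fin n) (Fin n ⊕ Fin m) ℝ)
    (N : ℕ → Ω → Matrix (Fin n ⊕ Fin m) (Fin n ⊕ Fin m) ℝ)
    (α : ℕ → Ω → ℝ) (Q0 : Matrix (Fin n ⊕ Fin m) (Fin n ⊕ Fin m) ℝ) :
    ℕ → Ω → Matrix (Fin n ⊕ Fin m) (Fin n ⊕ Fin m) ℝ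
  | 0 => fun _ => Q0
  | t + 1 => fun ω =>
      Qproc A N α Q0 t ω + α t ω •
        (N (t + 1) ω + (A (t + 1) ω)ᵀ * piMap (Qproc A N α Q0 t ω) * A (t + 1) ω
          - Qproc A N α Q0 t ω)

end LQ

/-- Closed-loop state under the constant linear feedback `u_t = G x_t`. -/
def fbState {n m : ℕ} {Ω : Type*} (A : ℕ → Ω → Matrix (Fin n) (Fin n ⊕ Fin m) ℝ)
    (G : Matrix (Fin m) (Fin n) ℝ) (x : Fin n → ℝ) : ℕ → Ω → Fin n → ℝ
  | 0 => fun _ => x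
  | t + 1 => fun ω =>
      A (t + 1) ω *ᵥ Sum.elim (fbState A G x t ω) (G *ᵥ fbState A G x t ω)


/-! ### Auxiliary lemmas -/

section Aux

open scoped Matrix.Norms.L2Operator

lemma measurable_entry {I J : Type*} (i : I) (j : J) :
    Measurable (fun M : Matrix I J ℝ => M i j) :=
  (measurable_pi_apply (X := fun _ : J => ℝ) j).comp
    (measurable_pi_apply (X := fun _ : I => J → ℝ) i)

lemma measurable_mulVec2 {I J : Type*} [Fintype J] :
    Measurable (fun p : Matrix I J ℝ × (J → ℝ) => p.1 *ᵥ p.2) := by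
  apply measurable_pi_lambda
  intro i
  simp only [Matrix.mulVec, dotProduct]
  exact Finset.measurable_sum _ fun j _ =>
    (((measurable_entry i j).comp measurable_fst).mul
      ((measurable_pi_apply j).comp measurable_snd))

lemma specNorm_eq {I J : Type*} [Fintype I] [Fintype J] [DecidableEq J]
    (M : Matrix I J ℝ) : specNorm M = ‖M‖ := rfl

lemma specNorm_nonneg {I J : Type*} [Fintype I] [Fintype J] [DecidableEq J]
    (M : Matrix I J ℝ) : 0 ≤ specNorm M := norm_nonneg _

lemma coord_le_norm {I : Type*} [Fintype I] (w : EuclideanSpace ℝ I) (i : I) :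
    |w i| ≤ ‖w‖ := by
  classical
  have h := abs_real_inner_le_norm (EuclideanSpace.single i (1:ℝ)) w
  rw [EuclideanSpace.inner_single_left, EuclideanSpace.norm_single] at h
  simpa using h

lemma abs_entry_le_specNorm {I J : Type*} [Fintype I] [Fintype J] [DecidableEq J]
    (M : Matrix I J ℝ) (i : I) (j : J) : |M i j| ≤ specNorm M := by
  have h1 : |M i j| ≤ ‖(EuclideanSpace.equiv I ℝ).symm (M *ᵥ (Pi.single j 1))‖ := by
    have he : ((EuclideanSpace.equiv I ℝ).symm (M *ᵥ (Pi.single j 1))) i = M i j := by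
      simp [Matrix.mulVec_single]
    rw [← he]
    exact coord_le_norm _ i
  have h2 := Matrix.l2_opNorm_mulVec M ((EuclideanSpace.equiv J ℝ).symm (Pi.single j 1))
  have h3 : ‖(EuclideanSpace.equiv J ℝ).symm (Pi.single j (1:ℝ))‖ = 1 := by
    classical
    have := EuclideanSpace.norm_single (𝕜 := ℝ) j (1:ℝ)
    rw [show EuclideanSpace.single j (1:ℝ) = (EuclideanSpace.equiv J ℝ).symm (Pi.single j 1)
      from rfl] at this
    rw [this]; norm_num
  rw [specNorm_eq]
  simp only [Equiv.apply_symm_apply] at h2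
  refine h1.trans ?_
  calc ‖(EuclideanSpace.equiv I ℝ).symm (M *ᵥ (Pi.single j 1))‖
      ≤ ‖M‖ * ‖(EuclideanSpace.equiv J ℝ).symm (Pi.single j (1:ℝ))‖ := h2
    _ = ‖M‖ := by rw [h3, mul_one]

lemma dot_block {n m : ℕ} (Q : Matrix (Fin n ⊕ Fin m) (Fin n ⊕ Fin m) ℝ)
    (v : Fin n → ℝ) (w : Fin m → ℝ) :
    (Sum.elim v w) ⬝ᵥ (Q *ᵥ Sum.elim v w) =
      v ⬝ᵥ (Q.toBlocks₁₁ *ᵥ v) + v ⬝ᵥ (Q.toBlocks₁₂ *ᵥ w)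
      + (w ⬝ᵥ (Q.toBlocks₂₁ *ᵥ v) + w ⬝ᵥ (Q.toBlocks₂₂ *ᵥ w)) := by
  conv_lhs => rw [← Matrix.fromBlocks_toBlocks Q, Matrix.fromBlocks_mulVec,
    sumElim_dotProduct_sumElim]
  rw [dotProduct_add, dotProduct_add]
  simp

lemma quad_block {n m : ℕ} (Q : Matrix (Fin n ⊕ Fin m) (Fin n ⊕ Fin m) ℝ)
    (hQs : Qᵀ = Q) (hinv : IsUnit Q.toBlocks₂₂.det) (v : Fin n → ℝ) :
    (Sum.elim v (gammaMap Q *ᵥ v)) ⬝ᵥ (Q *ᵥ Sum.elim v (gammaMap Q *ᵥ v)) =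
      v ⬝ᵥ (piMap Q *ᵥ v) := by
  have hC : Q.toBlocks₁₂ = (Q.toBlocks₂₁)ᵀ := by
    ext i j
    have h := congrFun (congrFun hQs (Sum.inl i)) (Sum.inr j)
    simpa [Matrix.toBlocks₁₂, Matrix.toBlocks₂₁, Matrix.transpose_apply] using h.symm
  rw [dot_block]
  have hw : Q.toBlocks₂₂ *ᵥ (gammaMap Q *ᵥ v) = -(Q.toBlocks₂₁ *ᵥ v) := by
    rw [gammaMap, Matrix.mulVec_mulVec, Matrix.mul_neg, Matrix.neg_mulVec,
      ← Matrix.mul_assoc, Matrix.mul_nonsing_inv _ hinv, Matrix.one_mul]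
  rw [hw, dotProduct_neg]
  have h2 : v ⬝ᵥ (Q.toBlocks₁₂ *ᵥ (gammaMap Q *ᵥ v)) =
      (gammaMap Q *ᵥ v) ⬝ᵥ (Q.toBlocks₂₁ *ᵥ v) := by
    rw [hC, Matrix.dotProduct_mulVec, Matrix.vecMul_transpose, dotProduct_comm]
  have h3 : v ⬝ᵥ (Q.toBlocks₁₂ *ᵥ (gammaMap Q *ᵥ v)) =
      -(v ⬝ᵥ ((Q.toBlocks₁₂ * Q.toBlocks₂₂⁻¹ * Q.toBlocks₂₁) *ᵥ v)) := by
    rw [gammaMap, Matrix.mulVec_mulVec, Matrix.mul_neg, Matrix.neg_mulVec,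
      dotProduct_neg, Matrix.mul_assoc]
  rw [piMap, Matrix.sub_mulVec, dotProduct_sub, ← h2, h3]
  ring

lemma dot_sandwich {ι κ : Type*} [Fintype ι] [Fintype κ]
    (B : Matrix κ ι ℝ) (K : Matrix κ κ ℝ) (v : ι → ℝ) :
    v ⬝ᵥ ((Bᵀ * K * B) *ᵥ v) = (B *ᵥ v) ⬝ᵥ (K *ᵥ (B *ᵥ v)) := by
  rw [Matrix.mul_assoc, ← Matrix.mulVec_mulVec, Matrix.dotProduct_mulVec,
    Matrix.vecMul_transpose, ← Matrix.mulVec_mulVec]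

lemma psd_quad_nonneg {ι : Type*} [Fintype ι] {M : Matrix ι ι ℝ}
    (hM : M.PosSemidef) (v : ι → ℝ) : 0 ≤ v ⬝ᵥ (M *ᵥ v) := by
  simpa using (posSemidef_iff_dotProduct_mulVec.mp hM).2 v

lemma dot_mulVec_eq_sum {ι : Type*} [Fintype ι] (M : Matrix ι ι ℝ) (v w : ι → ℝ) :
    v ⬝ᵥ (M *ᵥ w) = ∑ k, ∑ l, (v k * w l) * M k l := by
  simp only [dotProduct, Matrix.mulVec, Finset.mul_sum]
  exact Finset.sum_congr rfl fun k _ => Finset.sum_congr rfl fun l _ => by ring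

lemma sum_mul_sum_expand {ι : Type*} [Fintype ι] (a b f : ι → ℝ) :
    (∑ i, a i * f i) * (∑ j, b j * f j) = ∑ i, ∑ j, (a i * b j) * (f i * f j) := by
  rw [Finset.sum_mul_sum]
  exact Finset.sum_congr rfl fun i _ => Finset.sum_congr rfl fun j _ => by ring

end Aux


section Aux2

variable {n m : ℕ} {Ω : Type*} [MeasurableSpace Ω]

lemma measurable_elim_G (G : Matrix (Fin m) (Fin n) ℝ) :
    Measurable (fun v : Fin n → ℝ => Sum.elim v (G *ᵥ v)) := by
  apply measurable_pi_lambda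
  intro k
  cases k with
  | inl i => exact measurable_pi_apply i
  | inr i =>
    simp only [Sum.elim_inr, Matrix.mulVec, dotProduct]
    exact Finset.measurable_sum _ fun j _ => (measurable_pi_apply j).const_mul _

/-- Factorization of the closed-loop state as a measurable function of the first `t`
samples. -/
lemma fbState_factor (A : ℕ → Ω → Matrix (Fin n) (Fin n ⊕ Fin m) ℝ)
    (N : ℕ → Ω → Matrix (Fin n ⊕ Fin m) (Fin n ⊕ Fin m) ℝ)
    (G : Matrix (Fin m) (Fin n) ℝ) (x : Fin n → ℝ) (t : ℕ) :
    ∃ φ : (((Finset.range t : Finset ℕ) : Type) →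
        Matrix (Fin n) (Fin n ⊕ Fin m) ℝ × Matrix (Fin n ⊕ Fin m) (Fin n ⊕ Fin m) ℝ) →
        (Fin n → ℝ),
      Measurable φ ∧
        ∀ ω, fbState A G x t ω = φ (fun i => (A ((i : ℕ) + 1) ω, N ((i : ℕ) + 1) ω)) := by
  induction t with
  | zero => exact ⟨fun _ => x, measurable_const, fun ω => rfl⟩
  | succ t ih =>
    obtain ⟨φ, hφ, hrep⟩ := ih
    have hsub : ∀ i : ((Finset.range t : Finset ℕ) : Type), (i : ℕ) ∈ Finset.range (t + 1) := by
      intro i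
      have := i.2
      simp only [Finset.mem_range] at this ⊢
      omega
    set r : (((Finset.range (t+1) : Finset ℕ) : Type) →
        Matrix (Fin n) (Fin n ⊕ Fin m) ℝ × Matrix (Fin n ⊕ Fin m) (Fin n ⊕ Fin m) ℝ) →
        (((Finset.range t : Finset ℕ) : Type) →
        Matrix (Fin n) (Fin n ⊕ Fin m) ℝ × Matrix (Fin n ⊕ Fin m) (Fin n ⊕ Fin m) ℝ) :=
      fun w i => w ⟨(i : ℕ), hsub i⟩ with hr
    have hrmeas : Measurable r :=
      measurable_pi_lambda _ fun i => measurable_pi_apply _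
    refine ⟨fun w => (w ⟨t, Finset.self_mem_range_succ t⟩).1 *ᵥ
        Sum.elim (φ (r w)) (G *ᵥ (φ (r w))), ?_, ?_⟩
    · exact measurable_mulVec2.comp
        ((measurable_fst.comp (measurable_pi_apply _)).prodMk
          ((measurable_elim_G G).comp (hφ.comp hrmeas)))
    · intro ω
      show A (t+1) ω *ᵥ Sum.elim (fbState A G x t ω) (G *ᵥ fbState A G x t ω) = _
      rw [hrep ω]

lemma fbState_measurable (A : ℕ → Ω → Matrix (Fin n) (Fin n ⊕ Fin m) ℝ)
    (N : ℕ → Ω → Matrix (Fin n ⊕ Fin m) (Fin n ⊕ Fin m) ℝ)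
    (hmeas : ∀ t : ℕ, Measurable fun ω => (A (t + 1) ω, N (t + 1) ω))
    (G : Matrix (Fin m) (Fin n) ℝ) (x : Fin n → ℝ) (t : ℕ) :
    Measurable (fbState A G x t) := by
  obtain ⟨φ, hφ, hrep⟩ := fbState_factor A N G x t
  have : fbState A G x t = φ ∘ (fun ω (i : ((Finset.range t : Finset ℕ) : Type)) =>
      (A ((i : ℕ) + 1) ω, N ((i : ℕ) + 1) ω)) := funext fun ω => hrep ω
  rw [this]
  exact hφ.comp (measurable_pi_lambda _ fun i => hmeas (i : ℕ))

lemma fbState_indep (μpr : Measure Ω)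
    (A : ℕ → Ω → Matrix (Fin n) (Fin n ⊕ Fin m) ℝ)
    (N : ℕ → Ω → Matrix (Fin n ⊕ Fin m) (Fin n ⊕ Fin m) ℝ)
    (hmeas : ∀ t : ℕ, Measurable fun ω => (A (t + 1) ω, N (t + 1) ω))
    (hindep : ProbabilityTheory.iIndepFun
      (fun (t : ℕ) (ω : Ω) => (A (t + 1) ω, N (t + 1) ω)) μpr)
    (G : Matrix (Fin m) (Fin n) ℝ) (x : Fin n → ℝ) (t : ℕ) :
    IndepFun (fbState A G x t) (fun ω => (A (t + 1) ω, N (t + 1) ω)) μpr := by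
  obtain ⟨φ, hφ, hrep⟩ := fbState_factor A N G x t
  have hd : Disjoint (Finset.range t) ({t} : Finset ℕ) := by
    simp [Finset.disjoint_singleton_right]
  have h := hindep.indepFun_finset (Finset.range t) {t} hd hmeas
  have h2 := h.comp hφ (measurable_pi_apply
    (⟨t, Finset.mem_singleton_self t⟩ : (({t} : Finset ℕ) : Type)))
  have e1 : (φ ∘ fun ω (i : ((Finset.range t : Finset ℕ) : Type)) =>
      (A ((i : ℕ) + 1) ω, N ((i : ℕ) + 1) ω)) = fbState A G x t :=
    funext fun ω => (hrep ω).symm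
  exact e1 ▸ h2

lemma lqFiltration_mono (A : ℕ → Ω → Matrix (Fin n) (Fin n ⊕ Fin m) ℝ)
    (N : ℕ → Ω → Matrix (Fin n ⊕ Fin m) (Fin n ⊕ Fin m) ℝ) {s t : ℕ} (h : s ≤ t) :
    lqFiltration A N s ≤ lqFiltration A N t := by
  refine biSup_mono fun i hi => ?_
  simp only [Finset.mem_Icc] at hi ⊢
  omega

lemma measurable_pair_filtration (A : ℕ → Ω → Matrix (Fin n) (Fin n ⊕ Fin m) ℝ)
    (N : ℕ → Ω → Matrix (Fin n ⊕ Fin m) (Fin n ⊕ Fin m) ℝ) (t : ℕ) :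
    Measurable[lqFiltration A N (t+1)] (fun ω => (A (t + 1) ω, N (t + 1) ω)) := by
  have h1 : MeasurableSpace.comap (fun ω => (A (t+1) ω, N (t+1) ω)) inferInstance ≤
      lqFiltration A N (t+1) := by
    apply le_biSup (f := fun s => MeasurableSpace.comap
      (fun ω => (A s ω, N s ω)) inferInstance)
    exact Finset.mem_Icc.mpr ⟨by omega, le_rfl⟩
  exact (measurable_iff_comap_le.mpr le_rfl).mono h1 le_rfl

lemma fbState_adapted (A : ℕ → Ω → Matrix (Fin n) (Fin n ⊕ Fin m) ℝ)
    (N : ℕ → Ω → Matrix (Fin n ⊕ Fin m) (Fin n ⊕ Fin m) ℝ)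
    (G : Matrix (Fin m) (Fin n) ℝ) (x : Fin n → ℝ) (t : ℕ) :
    Measurable[lqFiltration A N t] (fbState A G x t) := by
  induction t with
  | zero => exact measurable_const
  | succ t ih =>
    have hA : Measurable[lqFiltration A N (t+1)] (A (t+1)) :=
      measurable_fst.comp (measurable_pair_filtration A N t)
    have hZ : Measurable[lqFiltration A N (t+1)] (fbState A G x t) :=
      ih.mono (lqFiltration_mono A N (Nat.le_succ t)) le_rfl
    show Measurable[lqFiltration A N (t+1)]
      (fun ω => A (t+1) ω *ᵥ Sum.elim (fbState A G x t ω) (G *ᵥ fbState A G x t ω))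
    exact measurable_mulVec2.comp (hA.prodMk ((measurable_elim_G G).comp hZ))


lemma integrable_quad {ι : Type*} [Fintype ι] {Ω : Type*} [MeasurableSpace Ω]
    (μ : Measure Ω) (M : Ω → Matrix ι ι ℝ)
    (hint : ∀ i j, Integrable (fun ω => M ω i j) μ) (v w : ι → ℝ) :
    Integrable (fun ω => v ⬝ᵥ (M ω *ᵥ w)) μ := by
  have h : (fun ω => v ⬝ᵥ (M ω *ᵥ w)) = fun ω => ∑ k, ∑ l, (v k * w l) * M ω k l :=
    funext fun ω => dot_mulVec_eq_sum _ _ _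
  rw [h]
  exact integrable_finset_sum _ fun k _ =>
    integrable_finset_sum _ fun l _ => (hint k l).const_mul _

lemma dot_matExp {ι : Type*} [Fintype ι] {Ω : Type*} [MeasurableSpace Ω]
    (μ : Measure Ω) (M : Ω → Matrix ι ι ℝ)
    (hint : ∀ i j, Integrable (fun ω => M ω i j) μ) (v w : ι → ℝ) :
    v ⬝ᵥ (matExp μ M *ᵥ w) = ∫ ω, v ⬝ᵥ (M ω *ᵥ w) ∂μ := by
  have h1 : ∫ ω, ∑ k, ∑ l, (v k * w l) * M ω k l ∂μ
      = ∑ k, ∑ l, (v k * w l) * (∫ ω, M ω k l ∂μ) := by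
    rw [integral_finset_sum _ (fun k _ =>
      integrable_finset_sum _ fun l _ => (hint k l).const_mul _)]
    refine Finset.sum_congr rfl fun k _ => ?_
    rw [integral_finset_sum _ (fun l _ => (hint k l).const_mul _)]
    exact Finset.sum_congr rfl fun l _ => integral_const_mul _ _
  calc v ⬝ᵥ (matExp μ M *ᵥ w)
      = ∑ k, ∑ l, (v k * w l) * (∫ ω, M ω k l ∂μ) := dot_mulVec_eq_sum _ _ _
    _ = ∫ ω, ∑ k, ∑ l, (v k * w l) * M ω k l ∂μ := h1.symm
    _ = ∫ ω, v ⬝ᵥ (M ω *ᵥ w) ∂μ :=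
        integral_congr_ae (Filter.Eventually.of_forall fun ω =>
          (dot_mulVec_eq_sum _ _ _).symm)

end Aux2


/-- If `K ⪰ 0` solves the ARE, then the linear feedback `u_t = Γ(Q*) x_t` is an
admissible control with expected cost at most `xᵀ K x`; in particular
`V(x) ≤ xᵀ K x` for all `x`, so the LQ problem is well-posed. -/
theorem feedback_control_of_ARE_solution
    {n m : ℕ} {Ω : Type*} [MeasurableSpace Ω]
    (μpr : Measure Ω) [IsProbabilityMeasure μpr]
    (A : ℕ → Ω → Matrix (Fin n) (Fin n ⊕ Fin m) ℝ)
    (N : ℕ → Ω → Matrix (Fin n ⊕ Fin m) (Fin n ⊕ Fin m) ℝ)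
    (hmeas : ∀ t : ℕ, Measurable fun ω => (A (t + 1) ω, N (t + 1) ω))
    (hindep : ProbabilityTheory.iIndepFun
      (fun (t : ℕ) (ω : Ω) => (A (t + 1) ω, N (t + 1) ω)) μpr)
    (hident : ∀ t : ℕ, ProbabilityTheory.IdentDistrib
      (fun ω => (A (t + 1) ω, N (t + 1) ω)) (fun ω => (A 1 ω, N 1 ω)) μpr μpr)
    (hNpsd : ∀ (t : ℕ) (ω : Ω), (N (t + 1) ω).PosSemidef)
    (hmom : Integrable
      (fun ω => specNorm (N 1 ω) ^ 2 + specNorm ((A 1 ω)ᵀ * A 1 ω) ^ 2) μpr)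
    (hENpos : (matExp μpr (N 1)).PosDef)
    (K : Matrix (Fin n) (Fin n) ℝ) (hK : K.PosSemidef)
    (hsol : K = piMap (matExp μpr (fun ω => N 1 ω + (A 1 ω)ᵀ * K * A 1 ω))) :
    ∀ x : Fin n → ℝ,
      (Admissible (lqFiltration A N)
        (fun t ω => gammaMap (matExp μpr (fun ω' => N 1 ω' + (A 1 ω')ᵀ * K * A 1 ω'))
          *ᵥ fbState A (gammaMap (matExp μpr (fun ω' => N 1 ω' + (A 1 ω')ᵀ * K * A 1 ω'))) x t ω)) ∧
      (∫⁻ ω, costJ A N x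
          (fun t ω' => gammaMap (matExp μpr (fun ω'' => N 1 ω'' + (A 1 ω'')ᵀ * K * A 1 ω''))
            *ᵥ fbState A (gammaMap (matExp μpr (fun ω'' => N 1 ω'' + (A 1 ω'')ᵀ * K * A 1 ω''))) x t ω') ω ∂μpr)
        ≤ ENNReal.ofReal (x ⬝ᵥ (K *ᵥ x)) ∧
      valueV μpr A N x ≤ ENNReal.ofReal (x ⬝ᵥ (K *ᵥ x)) ∧
      valueV μpr A N x < ⊤ := by
  classical
  intro x
  set Q : Matrix (Fin n ⊕ Fin m) (Fin n ⊕ Fin m) ℝ :=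
    matExp μpr (fun ω => N 1 ω + (A 1 ω)ᵀ * K * A 1 ω) with hQdef
  set Γ : Matrix (Fin m) (Fin n) ℝ := gammaMap Q with hGdef
  set Z : ℕ → Ω → Fin n → ℝ := fbState A Γ x with hZdef
  set u : ℕ → Ω → Fin m → ℝ := fun t ω => Γ *ᵥ Z t ω with hudef
  set zv : ℕ → Ω → (Fin n ⊕ Fin m) → ℝ :=
    fun t ω => Sum.elim (Z t ω) (Γ *ᵥ Z t ω) with hzvdef
  -- symmetry facts
  have hKsym : Kᵀ = K := by
    rw [← Matrix.conjTranspose_eq_transpose_of_trivial]; exact hK.1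
  have hNsym : ∀ (t : ℕ) (ω : Ω), (N (t+1) ω)ᵀ = N (t+1) ω := by
    intro t ω
    rw [← Matrix.conjTranspose_eq_transpose_of_trivial]; exact (hNpsd t ω).1
  have hMsym : ∀ (t : ℕ) (ω : Ω),
      (N (t+1) ω + (A (t+1) ω)ᵀ * K * A (t+1) ω)ᵀ
        = N (t+1) ω + (A (t+1) ω)ᵀ * K * A (t+1) ω := by
    intro t ω
    rw [Matrix.transpose_add, hNsym t ω, Matrix.transpose_mul, Matrix.transpose_mul,
      Matrix.transpose_transpose, hKsym, Matrix.mul_assoc]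
  -- measurable entry maps
  have he1 : ∀ i j : Fin n ⊕ Fin m,
      Measurable (fun p : Matrix (Fin n) (Fin n ⊕ Fin m) ℝ ×
        Matrix (Fin n ⊕ Fin m) (Fin n ⊕ Fin m) ℝ => (p.2 + p.1ᵀ * K * p.1) i j) := by
    intro i j
    have heq : (fun p : Matrix (Fin n) (Fin n ⊕ Fin m) ℝ ×
        Matrix (Fin n ⊕ Fin m) (Fin n ⊕ Fin m) ℝ => (p.2 + p.1ᵀ * K * p.1) i j)
        = fun p => p.2 i j + ∑ l, (∑ k, p.1 k i * K k l) * p.1 l j := by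
      funext p
      simp [Matrix.add_apply, Matrix.mul_apply, Matrix.transpose_apply]
    rw [heq]
    exact ((measurable_entry i j).comp measurable_snd).add
      (Finset.measurable_sum _ fun l _ =>
        ((Finset.measurable_sum _ fun k _ =>
          ((measurable_entry k i).comp measurable_fst).mul_const _)).mul
          ((measurable_entry l j).comp measurable_fst))
  have he2 : ∀ k l : Fin n ⊕ Fin m,
      Measurable (fun p : Matrix (Fin n) (Fin n ⊕ Fin m) ℝ ×
        Matrix (Fin n ⊕ Fin m) (Fin n ⊕ Fin m) ℝ => p.2 k l) :=
    fun k l => (measurable_entry k l).comp measurable_snd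
  have heA : ∀ (i j : Fin n) (k l : Fin n ⊕ Fin m),
      Measurable (fun p : Matrix (Fin n) (Fin n ⊕ Fin m) ℝ ×
        Matrix (Fin n ⊕ Fin m) (Fin n ⊕ Fin m) ℝ => p.1 i k * p.1 j l) :=
    fun i j k l => ((measurable_entry i k).comp measurable_fst).mul
      ((measurable_entry j l).comp measurable_fst)
  -- transfer of integrability / integrals across time via identical distribution
  have htrans : ∀ (t : ℕ) (g : Matrix (Fin n) (Fin n ⊕ Fin m) ℝ ×
      Matrix (Fin n ⊕ Fin m) (Fin n ⊕ Fin m) ℝ → ℝ), Measurable g →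
      Integrable (fun ω => g (A 1 ω, N 1 ω)) μpr →
      Integrable (fun ω => g (A (t+1) ω, N (t+1) ω)) μpr := by
    intro t g hg h0
    exact (((hident t).comp hg).integrable_iff).mpr h0
  have htransEq : ∀ (t : ℕ) (g : Matrix (Fin n) (Fin n ⊕ Fin m) ℝ ×
      Matrix (Fin n ⊕ Fin m) (Fin n ⊕ Fin m) ℝ → ℝ), Measurable g →
      ∫ ω, g (A (t+1) ω, N (t+1) ω) ∂μpr = ∫ ω, g (A 1 ω, N 1 ω) ∂μpr := by
    intro t g hg
    exact ((hident t).comp hg).integral_eq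
  -- pointwise bounds at time 1
  set gb : Ω → ℝ := fun ω =>
    1 + (specNorm (N 1 ω) ^ 2 + specNorm ((A 1 ω)ᵀ * A 1 ω) ^ 2) with hgbdef
  have hgbI : Integrable gb μpr := (integrable_const (1:ℝ)).add hmom
  have hgbnn : ∀ ω, 0 ≤ gb ω := by
    intro ω
    have := sq_nonneg (specNorm (N 1 ω))
    have := sq_nonneg (specNorm ((A 1 ω)ᵀ * A 1 ω))
    simp only [hgbdef]
    nlinarith
  have hbN : ∀ (ω : Ω) (i j : Fin n ⊕ Fin m), |N 1 ω i j| ≤ gb ω := by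
    intro ω i j
    have h1 := abs_entry_le_specNorm (N 1 ω) i j
    have h2 := sq_nonneg (specNorm (N 1 ω) - 1)
    have h3 := sq_nonneg (specNorm ((A 1 ω)ᵀ * A 1 ω))
    simp only [hgbdef]
    nlinarith
  have hbA2 : ∀ (ω : Ω) (i : Fin n) (j : Fin n ⊕ Fin m),
      (A 1 ω i j)^2 ≤ specNorm ((A 1 ω)ᵀ * A 1 ω) := by
    intro ω i j
    have h1 : (A 1 ω i j)^2 ≤ ((A 1 ω)ᵀ * A 1 ω) j j := by
      have he : ((A 1 ω)ᵀ * A 1 ω) j j = ∑ k, A 1 ω k j * A 1 ω k j := by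
        simp [Matrix.mul_apply, Matrix.transpose_apply]
      rw [he]
      have hs := Finset.single_le_sum (f := fun k => A 1 ω k j * A 1 ω k j)
        (fun k _ => mul_self_nonneg _) (Finset.mem_univ i)
      rw [sq]
      simpa using hs
    have h2 := abs_entry_le_specNorm ((A 1 ω)ᵀ * A 1 ω) j j
    calc (A 1 ω i j)^2 ≤ ((A 1 ω)ᵀ * A 1 ω) j j := h1
      _ ≤ |((A 1 ω)ᵀ * A 1 ω) j j| := le_abs_self _
      _ ≤ _ := h2
  have hbsA : ∀ ω : Ω, specNorm ((A 1 ω)ᵀ * A 1 ω) ≤ gb ω := by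
    intro ω
    have h2 := sq_nonneg (specNorm ((A 1 ω)ᵀ * A 1 ω) - 1)
    have h3 := sq_nonneg (specNorm (N 1 ω))
    simp only [hgbdef]
    nlinarith
  have hbAA : ∀ (ω : Ω) (i j : Fin n) (k l : Fin n ⊕ Fin m),
      |A 1 ω i k * A 1 ω j l| ≤ gb ω := by
    intro ω i j k l
    have h1 := hbA2 ω i k
    have h2 := hbA2 ω j l
    have h3 := hbsA ω
    have h4 : |A 1 ω i k * A 1 ω j l| ≤ ((A 1 ω i k)^2 + (A 1 ω j l)^2)/2 := by
      rw [abs_mul]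
      nlinarith [sq_abs (A 1 ω i k), sq_abs (A 1 ω j l),
        sq_nonneg (|A 1 ω i k| - |A 1 ω j l|), abs_nonneg (A 1 ω i k),
        abs_nonneg (A 1 ω j l)]
    nlinarith
  set cK : ℝ := ∑ k, ∑ l, |K k l| with hcKdef
  have hcKnn : 0 ≤ cK := Finset.sum_nonneg fun k _ =>
    Finset.sum_nonneg fun l _ => abs_nonneg _
  have hbM : ∀ (ω : Ω) (i j : Fin n ⊕ Fin m),
      |(N 1 ω + (A 1 ω)ᵀ * K * A 1 ω) i j| ≤ (1 + cK) * gb ω := by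
    intro ω i j
    have hentry : ((A 1 ω)ᵀ * K * A 1 ω) i j
        = ∑ l, ∑ k, A 1 ω k i * K k l * A 1 ω l j := by
      simp [Matrix.mul_apply, Matrix.transpose_apply, Finset.sum_mul]
    have h2 : |((A 1 ω)ᵀ * K * A 1 ω) i j| ≤ cK * gb ω := by
      rw [hentry]
      calc |∑ l, ∑ k, A 1 ω k i * K k l * A 1 ω l j|
          ≤ ∑ l, ∑ k, |A 1 ω k i * K k l * A 1 ω l j| :=
            (Finset.abs_sum_le_sum_abs _ _).trans (Finset.sum_le_sum fun l _ =>
              Finset.abs_sum_le_sum_abs _ _)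
        _ ≤ ∑ l, ∑ k, |K k l| * gb ω := by
            refine Finset.sum_le_sum fun l _ => Finset.sum_le_sum fun k _ => ?_
            have : |A 1 ω k i * K k l * A 1 ω l j| = |K k l| * |A 1 ω k i * A 1 ω l j| := by
              rw [abs_mul, abs_mul, abs_mul]; ring
            rw [this]
            exact mul_le_mul_of_nonneg_left (hbAA ω k l i j) (abs_nonneg _)
        _ = cK * gb ω := by
            have hrhs : cK * gb ω = ∑ k, ∑ l, |K k l| * gb ω := by
              rw [hcKdef, Finset.sum_mul]
              exact Finset.sum_congr rfl fun k _ => Finset.sum_mul _ _ _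
            rw [hrhs]
            exact Finset.sum_comm
    have h1 : |(N 1 ω + (A 1 ω)ᵀ * K * A 1 ω) i j|
        ≤ |N 1 ω i j| + |((A 1 ω)ᵀ * K * A 1 ω) i j| := by
      rw [Matrix.add_apply]; exact abs_add_le _ _
    have h0 := hbN ω i j
    nlinarith [hgbnn ω]
  -- integrability of entries, all times
  have hMint : ∀ (t : ℕ) (i j : Fin n ⊕ Fin m),
      Integrable (fun ω => (N (t+1) ω + (A (t+1) ω)ᵀ * K * A (t+1) ω) i j) μpr := by
    intro t i j
    refine htrans t _ (he1 i j) ?_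
    refine (hgbI.const_mul (1 + cK)).mono'
      ((he1 i j).comp (by simpa using hmeas 0)).aestronglyMeasurable
      (Filter.Eventually.of_forall fun ω => ?_)
    rw [Real.norm_eq_abs]
    exact hbM ω i j
  have hNint : ∀ (t : ℕ) (k l : Fin n ⊕ Fin m),
      Integrable (fun ω => N (t+1) ω k l) μpr := by
    intro t k l
    refine htrans t _ (he2 k l) ?_
    refine hgbI.mono' ((he2 k l).comp (by simpa using hmeas 0)).aestronglyMeasurable
      (Filter.Eventually.of_forall fun ω => ?_)
    rw [Real.norm_eq_abs]
    exact hbN ω k l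
  have hApint : ∀ (t : ℕ) (i j : Fin n) (k l : Fin n ⊕ Fin m),
      Integrable (fun ω => A (t+1) ω i k * A (t+1) ω j l) μpr := by
    intro t i j k l
    refine htrans t _ (heA i j k l) ?_
    refine hgbI.mono' ((heA i j k l).comp (by simpa using hmeas 0)).aestronglyMeasurable
      (Filter.Eventually.of_forall fun ω => ?_)
    rw [Real.norm_eq_abs]
    exact hbAA ω i j k l
  have hMeq : ∀ (t : ℕ) (i j : Fin n ⊕ Fin m),
      ∫ ω, (N (t+1) ω + (A (t+1) ω)ᵀ * K * A (t+1) ω) i j ∂μpr = Q i j := by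
    intro t i j
    have hq : Q i j = ∫ ω, (N 1 ω + (A 1 ω)ᵀ * K * A 1 ω) i j ∂μpr := rfl
    rw [hq]
    exact htransEq t _ (he1 i j)
  -- symmetry of Q
  have hQsym : Qᵀ = Q := by
    ext i j
    rw [Matrix.transpose_apply]
    show ∫ ω, (N 1 ω + (A 1 ω)ᵀ * K * A 1 ω) j i ∂μpr
      = ∫ ω, (N 1 ω + (A 1 ω)ᵀ * K * A 1 ω) i j ∂μpr
    refine integral_congr_ae (Filter.Eventually.of_forall fun ω => ?_)
    show (N 1 ω + (A 1 ω)ᵀ * K * A 1 ω) j i = (N 1 ω + (A 1 ω)ᵀ * K * A 1 ω) i j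
    have h := hMsym 0 ω
    simp only [zero_add] at h
    conv_lhs => rw [← h]
    rw [Matrix.transpose_apply]
  -- positive definiteness of the uu block
  have hQ22 : Q.toBlocks₂₂.PosDef := by
    refine posDef_iff_dotProduct_mulVec.mpr ⟨?_, ?_⟩
    · show Q.toBlocks₂₂ᴴ = Q.toBlocks₂₂
      rw [Matrix.conjTranspose_eq_transpose_of_trivial]
      ext i j
      rw [Matrix.transpose_apply]
      show Q (Sum.inr j) (Sum.inr i) = Q (Sum.inr i) (Sum.inr j)
      conv_lhs => rw [← hQsym]
      rw [Matrix.transpose_apply]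
    · intro v hv
      have hvv : Sum.elim (0 : Fin n → ℝ) v ≠ 0 := by
        intro hcon
        apply hv
        funext i
        have := congrFun hcon (Sum.inr i)
        simpa using this
      have hqr : v ⬝ᵥ (Q.toBlocks₂₂ *ᵥ v)
          = (Sum.elim (0 : Fin n → ℝ) v) ⬝ᵥ (Q *ᵥ Sum.elim (0 : Fin n → ℝ) v) := by
        rw [dot_block]; simp
      have hN1int : ∀ i j, Integrable (fun ω => N 1 ω i j) μpr := by
        intro i j; simpa using hNint 0 i j
      have hM1int : ∀ i j, Integrable
          (fun ω => (N 1 ω + (A 1 ω)ᵀ * K * A 1 ω) i j) μpr := by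
        intro i j; simpa using hMint 0 i j
      set vv : (Fin n ⊕ Fin m) → ℝ := Sum.elim (0 : Fin n → ℝ) v with hvvdef
      have hEMs : vv ⬝ᵥ (Q *ᵥ vv)
          = ∫ ω, vv ⬝ᵥ ((N 1 ω + (A 1 ω)ᵀ * K * A 1 ω) *ᵥ vv) ∂μpr :=
        dot_matExp μpr _ hM1int vv vv
      have hEN : vv ⬝ᵥ (matExp μpr (N 1) *ᵥ vv) = ∫ ω, vv ⬝ᵥ (N 1 ω *ᵥ vv) ∂μpr :=
        dot_matExp μpr (N 1) hN1int vv vv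
      have hmono : ∫ ω, vv ⬝ᵥ (N 1 ω *ᵥ vv) ∂μpr
          ≤ ∫ ω, vv ⬝ᵥ ((N 1 ω + (A 1 ω)ᵀ * K * A 1 ω) *ᵥ vv) ∂μpr := by
        refine integral_mono (integrable_quad μpr (N 1) hN1int vv vv)
          (integrable_quad μpr _ hM1int vv vv) fun ω => ?_
        have hsplit : vv ⬝ᵥ ((N 1 ω + (A 1 ω)ᵀ * K * A 1 ω) *ᵥ vv)
            = vv ⬝ᵥ (N 1 ω *ᵥ vv) + vv ⬝ᵥ (((A 1 ω)ᵀ * K * A 1 ω) *ᵥ vv) := by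
          rw [Matrix.add_mulVec, dotProduct_add]
        have hpos : 0 ≤ vv ⬝ᵥ (((A 1 ω)ᵀ * K * A 1 ω) *ᵥ vv) := by
          rw [dot_sandwich]
          exact psd_quad_nonneg hK _
        rw [hsplit]
        linarith
      have hposN : 0 < vv ⬝ᵥ (matExp μpr (N 1) *ᵥ vv) := by
        have := (posDef_iff_dotProduct_mulVec.mp hENpos).2 hvv
        simpa using this
      show 0 < star v ⬝ᵥ Q.toBlocks₂₂ *ᵥ v
      have hstar : star v = v := by simp
      rw [hstar, hqr]
      calc (0:ℝ) < vv ⬝ᵥ (matExp μpr (N 1) *ᵥ vv) := hposN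
        _ = ∫ ω, vv ⬝ᵥ (N 1 ω *ᵥ vv) ∂μpr := hEN
        _ ≤ ∫ ω, vv ⬝ᵥ ((N 1 ω + (A 1 ω)ᵀ * K * A 1 ω) *ᵥ vv) ∂μpr := hmono
        _ = vv ⬝ᵥ (Q *ᵥ vv) := hEMs.symm
  have hdet : IsUnit Q.toBlocks₂₂.det := isUnit_iff_ne_zero.mpr (ne_of_gt hQ22.det_pos)
  have hπ : piMap Q = K := hsol.symm
  have hquad : ∀ v : Fin n → ℝ,
      (Sum.elim v (Γ *ᵥ v)) ⬝ᵥ (Q *ᵥ Sum.elim v (Γ *ᵥ v)) = v ⬝ᵥ (K *ᵥ v) := by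
    intro v
    rw [hGdef, quad_block Q hQsym hdet v, hπ]
  -- basic process facts
  have hZsucc : ∀ (t : ℕ) (ω : Ω), Z (t+1) ω = A (t+1) ω *ᵥ zv t ω := fun t ω => rfl
  set gmat : (Fin n ⊕ Fin m) → Fin n → ℝ :=
    Sum.elim (fun a i => if a = i then 1 else 0) (fun b i => Γ b i) with hgmat
  have hzv_eq : ∀ (t : ℕ) (ω : Ω) (k : Fin n ⊕ Fin m),
      zv t ω k = ∑ i, gmat k i * Z t ω i := by
    intro t ω k
    cases k with
    | inl a =>
      show Z t ω a = ∑ i, gmat (Sum.inl a) i * Z t ω i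
      simp [hgmat, ite_mul]
    | inr b =>
      show (Γ *ᵥ Z t ω) b = ∑ i, gmat (Sum.inr b) i * Z t ω i
      simp [hgmat, Matrix.mulVec, dotProduct]
  have hψmeas : ∀ k l : Fin n ⊕ Fin m,
      Measurable (fun v : Fin n → ℝ =>
        (∑ i, gmat k i * v i) * (∑ j, gmat l j * v j)) := by
    intro k l
    exact (Finset.measurable_sum _ fun i _ =>
        (measurable_pi_apply i).const_mul _).mul
      (Finset.measurable_sum _ fun j _ => (measurable_pi_apply j).const_mul _)
  have hzvprod_eq : ∀ (t : ℕ) (k l : Fin n ⊕ Fin m),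
      (fun ω => zv t ω k * zv t ω l)
        = (fun v : Fin n → ℝ =>
            (∑ i, gmat k i * v i) * (∑ j, gmat l j * v j)) ∘ (Z t) := by
    intro t k l
    funext ω
    simp only [Function.comp_apply]
    rw [hzv_eq, hzv_eq]
  have hZmeas : ∀ t, Measurable (Z t) := fun t => fbState_measurable A N hmeas Γ x t
  have hzvprodmeas : ∀ (t : ℕ) (k l : Fin n ⊕ Fin m),
      Measurable (fun ω => zv t ω k * zv t ω l) := by
    intro t k l
    rw [hzvprod_eq]
    exact (hψmeas k l).comp (hZmeas t)
  have hind : ∀ t : ℕ, IndepFun (Z t) (fun ω => (A (t+1) ω, N (t+1) ω)) μpr :=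
    fun t => fbState_indep μpr A N hmeas hindep Γ x t
  have hindprod : ∀ (t : ℕ) (k l : Fin n ⊕ Fin m)
      (h : Matrix (Fin n) (Fin n ⊕ Fin m) ℝ ×
        Matrix (Fin n ⊕ Fin m) (Fin n ⊕ Fin m) ℝ → ℝ), Measurable h →
      IndepFun (fun ω => zv t ω k * zv t ω l)
        (fun ω => h (A (t+1) ω, N (t+1) ω)) μpr := by
    intro t k l h hh
    have hc := (hind t).comp (hψmeas k l) hh
    rw [hzvprod_eq t k l]
    exact hc
  -- second moments of the state, by induction
  have hzv_of : ∀ t : ℕ,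
      (∀ i j : Fin n, Integrable (fun ω => Z t ω i * Z t ω j) μpr) →
      ∀ k l : Fin n ⊕ Fin m, Integrable (fun ω => zv t ω k * zv t ω l) μpr := by
    intro t ih k l
    rw [hzvprod_eq t k l]
    have hexp : ((fun v : Fin n → ℝ =>
        (∑ i, gmat k i * v i) * (∑ j, gmat l j * v j)) ∘ (Z t))
        = fun ω => ∑ i', ∑ j', (gmat k i' * gmat l j') * (Z t ω i' * Z t ω j') := by
      funext ω
      simp only [Function.comp_apply]
      rw [sum_mul_sum_expand]
    rw [hexp]
    exact integrable_finset_sum _ fun i' _ =>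
      integrable_finset_sum _ fun j' _ => (ih i' j').const_mul _
  have hZ2 : ∀ t : ℕ, ∀ i j : Fin n,
      Integrable (fun ω => Z t ω i * Z t ω j) μpr := by
    intro t
    induction t with
    | zero => intro i j; exact integrable_const (x i * x j)
    | succ t ih =>
      intro i j
      have hzv2 := hzv_of t ih
      have hrw : (fun ω => Z (t+1) ω i * Z (t+1) ω j)
          = fun ω => ∑ k, ∑ l,
              (A (t+1) ω i k * A (t+1) ω j l) * (zv t ω k * zv t ω l) := by
        funext ω
        rw [hZsucc t ω]
        simp only [Matrix.mulVec, dotProduct]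
        rw [sum_mul_sum_expand (fun k => A (t+1) ω i k) (fun l => A (t+1) ω j l) (zv t ω)]
      rw [hrw]
      refine integrable_finset_sum _ fun k _ => integrable_finset_sum _ fun l _ => ?_
      have hAZind : IndepFun (fun ω => A (t+1) ω i k * A (t+1) ω j l)
          (fun ω => zv t ω k * zv t ω l) μpr :=
        (hindprod t k l _ (heA i j k l)).symm
      exact hAZind.integrable_mul (hApint t i j k l) (hzv2 k l)
  have hzv2 : ∀ (t : ℕ) (k l : Fin n ⊕ Fin m),
      Integrable (fun ω => zv t ω k * zv t ω l) μpr := fun t => hzv_of t (hZ2 t)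
  -- integrability of quadratic forms
  have hqKint : ∀ t : ℕ, Integrable (fun ω => Z t ω ⬝ᵥ (K *ᵥ Z t ω)) μpr := by
    intro t
    have h : (fun ω => Z t ω ⬝ᵥ (K *ᵥ Z t ω))
        = fun ω => ∑ i, ∑ j, (Z t ω i * Z t ω j) * K i j :=
      funext fun ω => dot_mulVec_eq_sum _ _ _
    rw [h]
    exact integrable_finset_sum _ fun i _ =>
      integrable_finset_sum _ fun j _ => (hZ2 t i j).mul_const _
  have hcint : ∀ t : ℕ,
      Integrable (fun ω => zv t ω ⬝ᵥ (N (t+1) ω *ᵥ zv t ω)) μpr := by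
    intro t
    have h : (fun ω => zv t ω ⬝ᵥ (N (t+1) ω *ᵥ zv t ω))
        = fun ω => ∑ k, ∑ l, (zv t ω k * zv t ω l) * N (t+1) ω k l :=
      funext fun ω => dot_mulVec_eq_sum _ _ _
    rw [h]
    exact integrable_finset_sum _ fun k _ => integrable_finset_sum _ fun l _ =>
      (hindprod t k l _ (he2 k l)).integrable_mul (hzv2 t k l) (hNint t k l)
  have hMzint : ∀ t : ℕ, Integrable (fun ω =>
      zv t ω ⬝ᵥ ((N (t+1) ω + (A (t+1) ω)ᵀ * K * A (t+1) ω) *ᵥ zv t ω)) μpr := by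
    intro t
    have h : (fun ω => zv t ω ⬝ᵥ ((N (t+1) ω + (A (t+1) ω)ᵀ * K * A (t+1) ω) *ᵥ zv t ω))
        = fun ω => ∑ k, ∑ l, (zv t ω k * zv t ω l)
            * (N (t+1) ω + (A (t+1) ω)ᵀ * K * A (t+1) ω) k l :=
      funext fun ω => dot_mulVec_eq_sum _ _ _
    rw [h]
    exact integrable_finset_sum _ fun k _ => integrable_finset_sum _ fun l _ =>
      (hindprod t k l _ (he1 k l)).integrable_mul (hzv2 t k l) (hMint t k l)
  -- one-step expectation identity
  have hstepQ : ∀ t : ℕ,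
      ∫ ω, zv t ω ⬝ᵥ ((N (t+1) ω + (A (t+1) ω)ᵀ * K * A (t+1) ω) *ᵥ zv t ω) ∂μpr
        = ∫ ω, Z t ω ⬝ᵥ (K *ᵥ Z t ω) ∂μpr := by
    intro t
    have hint1 : ∀ k l : Fin n ⊕ Fin m, Integrable (fun ω => zv t ω k * zv t ω l
        * (N (t+1) ω + (A (t+1) ω)ᵀ * K * A (t+1) ω) k l) μpr :=
      fun k l => (hindprod t k l _ (he1 k l)).integrable_mul (hzv2 t k l) (hMint t k l)
    have hf1 : ∀ k ∈ (Finset.univ : Finset (Fin n ⊕ Fin m)), Integrable (fun ω => ∑ l,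
        zv t ω k * zv t ω l * (N (t+1) ω + (A (t+1) ω)ᵀ * K * A (t+1) ω) k l) μpr :=
      fun k _ => integrable_finset_sum _ fun l _ => hint1 k l
    have h1 : ∫ ω, zv t ω ⬝ᵥ ((N (t+1) ω + (A (t+1) ω)ᵀ * K * A (t+1) ω) *ᵥ zv t ω) ∂μpr
        = ∑ k, ∑ l, ∫ ω, (zv t ω k * zv t ω l)
            * (N (t+1) ω + (A (t+1) ω)ᵀ * K * A (t+1) ω) k l ∂μpr := by
      calc ∫ ω, zv t ω ⬝ᵥ ((N (t+1) ω + (A (t+1) ω)ᵀ * K * A (t+1) ω) *ᵥ zv t ω) ∂μpr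
          = ∫ ω, ∑ k, ∑ l, zv t ω k * zv t ω l
              * (N (t+1) ω + (A (t+1) ω)ᵀ * K * A (t+1) ω) k l ∂μpr :=
            integral_congr_ae (Filter.Eventually.of_forall fun ω =>
              dot_mulVec_eq_sum _ _ _)
        _ = ∑ k, ∫ ω, ∑ l, zv t ω k * zv t ω l
              * (N (t+1) ω + (A (t+1) ω)ᵀ * K * A (t+1) ω) k l ∂μpr :=
            integral_finset_sum _ hf1
        _ = ∑ k, ∑ l, ∫ ω, (zv t ω k * zv t ω l)
              * (N (t+1) ω + (A (t+1) ω)ᵀ * K * A (t+1) ω) k l ∂μpr :=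
            Finset.sum_congr rfl fun k _ => integral_finset_sum _ fun l _ => hint1 k l
    have h2 : ∀ k l : Fin n ⊕ Fin m,
        ∫ ω, (zv t ω k * zv t ω l)
            * (N (t+1) ω + (A (t+1) ω)ᵀ * K * A (t+1) ω) k l ∂μpr
          = (∫ ω, zv t ω k * zv t ω l ∂μpr) * Q k l := by
      intro k l
      rw [(hindprod t k l _ (he1 k l)).integral_fun_mul_eq_mul_integral
        (hzvprodmeas t k l).aestronglyMeasurable
        ((he1 k l).comp (hmeas t)).aestronglyMeasurable]
      rw [hMeq t k l]
    have h3 : ∑ k, ∑ l, (∫ ω, zv t ω k * zv t ω l ∂μpr) * Q k l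
        = ∫ ω, zv t ω ⬝ᵥ (Q *ᵥ zv t ω) ∂μpr := by
      have h4 : ∀ k l : Fin n ⊕ Fin m,
          (∫ ω, zv t ω k * zv t ω l ∂μpr) * Q k l
            = ∫ ω, (zv t ω k * zv t ω l) * Q k l ∂μpr :=
        fun k l => (integral_mul_const _ _).symm
      calc ∑ k, ∑ l, (∫ ω, zv t ω k * zv t ω l ∂μpr) * Q k l
          = ∑ k, ∑ l, ∫ ω, (zv t ω k * zv t ω l) * Q k l ∂μpr :=
            Finset.sum_congr rfl fun k _ => Finset.sum_congr rfl fun l _ => h4 k l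
        _ = ∫ ω, ∑ k, ∑ l, (zv t ω k * zv t ω l) * Q k l ∂μpr := by
            have hint2 : ∀ k l : Fin n ⊕ Fin m,
                Integrable (fun ω => zv t ω k * zv t ω l * Q k l) μpr :=
              fun k l => (hzv2 t k l).mul_const _
            have hf2 : ∀ k ∈ (Finset.univ : Finset (Fin n ⊕ Fin m)),
                Integrable (fun ω => ∑ l, zv t ω k * zv t ω l * Q k l) μpr :=
              fun k _ => integrable_finset_sum _ fun l _ => hint2 k l
            calc ∑ k, ∑ l, ∫ ω, (zv t ω k * zv t ω l) * Q k l ∂μpr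
                = ∑ k, ∫ ω, ∑ l, zv t ω k * zv t ω l * Q k l ∂μpr :=
                  Finset.sum_congr rfl fun k _ =>
                    (integral_finset_sum _ fun l _ => hint2 k l).symm
              _ = ∫ ω, ∑ k, ∑ l, zv t ω k * zv t ω l * Q k l ∂μpr :=
                  (integral_finset_sum _ hf2).symm
        _ = ∫ ω, zv t ω ⬝ᵥ (Q *ᵥ zv t ω) ∂μpr :=
            integral_congr_ae (Filter.Eventually.of_forall fun ω =>
              (dot_mulVec_eq_sum _ _ _).symm)
    have h5 : ∫ ω, zv t ω ⬝ᵥ (Q *ᵥ zv t ω) ∂μpr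
        = ∫ ω, Z t ω ⬝ᵥ (K *ᵥ Z t ω) ∂μpr := by
      refine integral_congr_ae (Filter.Eventually.of_forall fun ω => ?_)
      exact hquad (Z t ω)
    rw [h1]
    rw [Finset.sum_congr rfl fun k _ => Finset.sum_congr rfl fun l _ => h2 k l]
    rw [h3, h5]
  -- pointwise one-step split
  have hsplit : ∀ (t : ℕ) (ω : Ω),
      zv t ω ⬝ᵥ ((N (t+1) ω + (A (t+1) ω)ᵀ * K * A (t+1) ω) *ᵥ zv t ω)
        = zv t ω ⬝ᵥ (N (t+1) ω *ᵥ zv t ω) + Z (t+1) ω ⬝ᵥ (K *ᵥ Z (t+1) ω) := by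
    intro t ω
    rw [hZsucc t ω, Matrix.add_mulVec, dotProduct_add, dot_sandwich]
  have hstep : ∀ t : ℕ,
      (∫ ω, zv t ω ⬝ᵥ (N (t+1) ω *ᵥ zv t ω) ∂μpr)
        + (∫ ω, Z (t+1) ω ⬝ᵥ (K *ᵥ Z (t+1) ω) ∂μpr)
        = ∫ ω, Z t ω ⬝ᵥ (K *ᵥ Z t ω) ∂μpr := by
    intro t
    rw [← integral_add (hcint t) (hqKint (t+1)), ← hstepQ t]
    exact integral_congr_ae (Filter.Eventually.of_forall fun ω => (hsplit t ω).symm)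
  have hcnonneg : ∀ (t : ℕ) (ω : Ω), 0 ≤ zv t ω ⬝ᵥ (N (t+1) ω *ᵥ zv t ω) :=
    fun t ω => psd_quad_nonneg (hNpsd t ω) _
  have hqKnonneg : ∀ t : ℕ, 0 ≤ ∫ ω, Z t ω ⬝ᵥ (K *ᵥ Z t ω) ∂μpr :=
    fun t => integral_nonneg fun ω => psd_quad_nonneg hK _
  have hq0 : ∫ ω, Z 0 ω ⬝ᵥ (K *ᵥ Z 0 ω) ∂μpr = x ⬝ᵥ (K *ᵥ x) := by
    have h : (fun ω : Ω => Z 0 ω ⬝ᵥ (K *ᵥ Z 0 ω)) = fun _ => x ⬝ᵥ (K *ᵥ x) := rfl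
    rw [h, integral_const]
    simp
  have htel : ∀ T : ℕ,
      (∑ t ∈ Finset.range T, ∫ ω, zv t ω ⬝ᵥ (N (t+1) ω *ᵥ zv t ω) ∂μpr)
        + ∫ ω, Z T ω ⬝ᵥ (K *ᵥ Z T ω) ∂μpr = x ⬝ᵥ (K *ᵥ x) := by
    intro T
    induction T with
    | zero => simpa using hq0
    | succ T ih =>
      rw [Finset.sum_range_succ]
      have := hstep T
      linarith
  have hpartial : ∀ T : ℕ,
      ∑ t ∈ Finset.range T, ∫ ω, zv t ω ⬝ᵥ (N (t+1) ω *ᵥ zv t ω) ∂μpr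
        ≤ x ⬝ᵥ (K *ᵥ x) := by
    intro T
    have h1 := htel T
    have h2 := hqKnonneg T
    linarith
  -- identify the stage costs of the control
  have hstate : ∀ t : ℕ, statePath A x u t = Z t := by
    intro t
    induction t with
    | zero => rfl
    | succ t ih =>
      funext ω
      show A (t+1) ω *ᵥ Sum.elim (statePath A x u t ω) (u t ω) = Z (t+1) ω
      rw [ih, hudef, hZdef]
      rfl
  have hsc : ∀ (t : ℕ) (ω : Ω),
      stageCost A N x u t ω = zv t ω ⬝ᵥ (N (t+1) ω *ᵥ zv t ω) := by
    intro t ω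
    show Sum.elim (statePath A x u t ω) (u t ω)
        ⬝ᵥ (N (t+1) ω *ᵥ Sum.elim (statePath A x u t ω) (u t ω)) = _
    rw [hstate t, hzvdef, hudef]
  -- admissibility
  have hadm : Admissible (lqFiltration A N) u := by
    intro t
    have hlin : Measurable (fun v : Fin n → ℝ => Γ *ᵥ v) :=
      measurable_mulVec2.comp (measurable_const.prodMk measurable_id)
    exact hlin.comp (fbState_adapted A N Γ x t)
  -- the expected-cost bound
  have hscmeas : ∀ t : ℕ, Measurable (stageCost A N x u t) := by
    intro t
    have h : stageCost A N x u t
        = fun ω => ∑ k, ∑ l, (zv t ω k * zv t ω l) * N (t+1) ω k l := by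
      funext ω
      rw [hsc t ω, dot_mulVec_eq_sum]
    rw [h]
    exact Finset.measurable_sum _ fun k _ => Finset.measurable_sum _ fun l _ =>
      (hzvprodmeas t k l).mul ((measurable_entry k l).comp
        (measurable_snd.comp (hmeas t)))
  have hscint : ∀ t : ℕ, Integrable (stageCost A N x u t) μpr := by
    intro t
    have h : stageCost A N x u t = fun ω => zv t ω ⬝ᵥ (N (t+1) ω *ᵥ zv t ω) :=
      funext fun ω => hsc t ω
    rw [h]
    exact hcint t
  have hscnonneg : ∀ (t : ℕ) (ω : Ω), 0 ≤ stageCost A N x u t ω := by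
    intro t ω
    rw [hsc t ω]
    exact hcnonneg t ω
  have hcost : (∫⁻ ω, costJ A N x u ω ∂μpr) ≤ ENNReal.ofReal (x ⬝ᵥ (K *ᵥ x)) := by
    have h1 : (∫⁻ ω, costJ A N x u ω ∂μpr)
        = ∑' t, ∫⁻ ω, ENNReal.ofReal (stageCost A N x u t ω) ∂μpr := by
      rw [show (fun ω => costJ A N x u ω)
          = fun ω => ∑' t, ENNReal.ofReal (stageCost A N x u t ω) from rfl]
      exact lintegral_tsum fun t => ((hscmeas t).ennreal_ofReal).aemeasurable
    have h2 : ∀ t : ℕ, ∫⁻ ω, ENNReal.ofReal (stageCost A N x u t ω) ∂μpr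
        = ENNReal.ofReal (∫ ω, stageCost A N x u t ω ∂μpr) :=
      fun t => (ofReal_integral_eq_lintegral_ofReal (hscint t)
        (Filter.Eventually.of_forall fun ω => hscnonneg t ω)).symm
    rw [h1]
    rw [tsum_congr h2]
    rw [ENNReal.tsum_eq_iSup_sum]
    refine iSup_le fun s => ?_
    obtain ⟨T, hT⟩ := Finset.exists_nat_subset_range s
    have hnn : ∀ t : ℕ, 0 ≤ ∫ ω, stageCost A N x u t ω ∂μpr :=
      fun t => integral_nonneg fun ω => hscnonneg t ω
    calc ∑ t ∈ s, ENNReal.ofReal (∫ ω, stageCost A N x u t ω ∂μpr)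
        ≤ ∑ t ∈ Finset.range T, ENNReal.ofReal (∫ ω, stageCost A N x u t ω ∂μpr) :=
          Finset.sum_le_sum_of_subset hT
      _ = ENNReal.ofReal (∑ t ∈ Finset.range T, ∫ ω, stageCost A N x u t ω ∂μpr) :=
          (ENNReal.ofReal_sum_of_nonneg fun t _ => hnn t).symm
      _ ≤ ENNReal.ofReal (x ⬝ᵥ (K *ᵥ x)) := by
          apply ENNReal.ofReal_le_ofReal
          have he : ∀ t : ℕ, ∫ ω, stageCost A N x u t ω ∂μpr
              = ∫ ω, zv t ω ⬝ᵥ (N (t+1) ω *ᵥ zv t ω) ∂μpr :=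
            fun t => integral_congr_ae (Filter.Eventually.of_forall fun ω => hsc t ω)
          rw [Finset.sum_congr rfl fun t _ => he t]
          exact hpartial T
  have hvalue : valueV μpr A N x ≤ ENNReal.ofReal (x ⬝ᵥ (K *ᵥ x)) := by
    refine le_trans ?_ hcost
    exact iInf₂_le u hadm
  exact ⟨hadm, hcost, hvalue, lt_of_le_of_lt hvalue ENNReal.ofReal_lt_top⟩

end
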